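/- arXiv:1905.13369 — 3 statements merged into one kernel-verified Lean document; each statement's English description precedes it below -/
import Mathlib

section
/- WKD-IBE decryption correctness: if a ciphertext C = (e(g₁,g₂)^s · m, g^s, Q_S^s) is produced by encrypting m ∈ G_T under pattern S with randomness s, and K = (g₂^α · Q_S^r, g^r, ·) is a private key for the same pattern S with randomness r, where g₁ = g^α and Q_S = g₃ · ∏_{(i,aᵢ)∈fixed(S)} hᵢ^{aᵢ}, then X · e(k₁, Z) · e(Y, k₀)⁻¹ = m, where C = (X, Y, Z), k₀ = g₂^α · Q_S^r, k₁ = g^r. -/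
/-- Exponentiation of a group element by an element of `ZMod p`
(well-defined for groups of order `p`). -/
def zpModPow {p : ℕ} {G : Type*} [Monoid G] (x : G) (a : ZMod p) : G :=
  x ^ a.val

lemma zpModPow_one {p : ℕ} (hp : 1 < p) {G : Type*} [Monoid G] (x : G) :
    zpModPow x (1 : ZMod p) = x := by
  haveI : Fact (1 < p) := ⟨hp⟩
  simp [zpModPow, ZMod.val_one]

/-- WKD-IBE decryption correctness: if `C = (e(g₁,g₂)^s · m, g^s, Q_S^s)` encrypts
`m ∈ G_T` under pattern `S` with randomness `s`, and `K = (g₂^α · Q_S^r, g^r, ·)`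
is a key for the same pattern `S` (where `g₁ = g^α` and
`Q_S = g₃ · ∏_{(i,aᵢ)∈fixed(S)} hᵢ^{aᵢ}`), then `X · e(k₁, Z) · e(Y, k₀)⁻¹ = m`. -/
theorem wkdibe_decrypt_correct {p : ℕ} (hp : p.Prime)
    {G₁ G₂ GT : Type*} [CommGroup G₁] [CommGroup G₂] [CommGroup GT]
    (e : G₁ → G₂ → GT)
    (hbil : ∀ (a : G₁) (b : G₂) (x y : ZMod p),
      e (zpModPow a x) (zpModPow b y) = zpModPow (e a b) (x * y))
    (hmulL : ∀ (a a' : G₁) (b : G₂), e (a * a') b = e a b * e a' b)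
    (hmulR : ∀ (a : G₁) (b b' : G₂), e a (b * b') = e a b * e a b')
    {ℓ : ℕ} (g : G₂) (g₂ g₃ : G₁) (h : Fin ℓ → G₁)
    (α : ZMod p) (g₁ : G₂) (hg₁ : g₁ = zpModPow g α)
    (S : Fin ℓ → Option (ZMod p)) (QS : G₁)
    (hQS : QS = g₃ * ∏ i ∈ Finset.univ.filter (fun i => (S i).isSome),
      zpModPow (h i) ((S i).getD 0))
    (m : GT) (s r : ZMod p)
    (X : GT) (Y : G₂) (Z : G₁) (k₀ : G₁) (k₁ : G₂)
    (hX : X = zpModPow (e g₂ g₁) s * m)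
    (hY : Y = zpModPow g s)
    (hZ : Z = zpModPow QS s)
    (hk₀ : k₀ = zpModPow g₂ α * zpModPow QS r)
    (hk₁ : k₁ = zpModPow g r) :
    X * e Z k₁ * (e k₀ Y)⁻¹ = m := by
  have eA : e g₂ (zpModPow g α) = zpModPow (e g₂ g) α := by
    have := hbil g₂ g 1 α; rw [zpModPow_one hp.one_lt g₂, one_mul] at this; exact this
  have eB : e (zpModPow g₂ α) g = zpModPow (e g₂ g) α := by
    have := hbil g₂ g α 1; rw [zpModPow_one hp.one_lt g, mul_one] at this; exact this
  have eC : zpModPow (e g₂ g₁) s = e (zpModPow g₂ α) (zpModPow g s) := by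
    rw [hg₁, eA, ← eB]
    have := hbil (zpModPow g₂ α) g 1 s
    rw [zpModPow_one hp.one_lt (zpModPow g₂ α), one_mul] at this
    exact this.symm
  subst hX hY hZ hk₀ hk₁
  rw [eC, hmulL, hbil QS g s r, hbil QS g r s, mul_comm r s,
    mul_inv_eq_iff_eq_mul, mul_comm (e (zpModPow g₂ α) (zpModPow g s)) m, mul_assoc]
end

section
/- WKD-IBE signature verification correctness: if σ = (g₂^α · (g₃ · h_s^m · ∏_{(i,aᵢ)∈fixed(S)} hᵢ^{aᵢ})^r, g^r) for some r ∈ ZMod p, then e(s₀, g) = e(g₁, g₂) · e(g₃ · h_s^m · ∏_{(i,aᵢ)∈fixed(S)} hᵢ^{aᵢ}, s₁), where σ = (s₀, s₁) and g₁ = g^α. -/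
/-- WKD-IBE signature verification correctness: if
`σ = (g₂^α · (g₃ · h_s^m · ∏_{(i,aᵢ)∈fixed(S)} hᵢ^{aᵢ})^r, g^r)` for some
`r ∈ ZMod p`, then
`e(s₀, g) = e(g₁, g₂) · e(g₃ · h_s^m · ∏_{(i,aᵢ)∈fixed(S)} hᵢ^{aᵢ}, s₁)`,
where `σ = (s₀, s₁)` and `g₁ = g^α`. -/
theorem wkdibe_verify_correct {p : ℕ} (hp : p.Prime)
    {G₁ G₂ GT : Type*} [CommGroup G₁] [CommGroup G₂] [CommGroup GT]
    (e : G₁ → G₂ → GT)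
    (hbil : ∀ (a : G₁) (b : G₂) (x y : ZMod p),
      e (zpModPow a x) (zpModPow b y) = zpModPow (e a b) (x * y))
    (hmulL : ∀ (a a' : G₁) (b : G₂), e (a * a') b = e a b * e a' b)
    (hmulR : ∀ (a : G₁) (b b' : G₂), e a (b * b') = e a b * e a b')
    {ℓ : ℕ} (g : G₂) (g₂ g₃ hs : G₁) (h : Fin ℓ → G₁)
    (α : ZMod p) (g₁ : G₂) (hg₁ : g₁ = zpModPow g α)
    (m : ZMod p) (S : Fin ℓ → Option (ZMod p)) (Q : G₁)
    (hQ : Q = g₃ * zpModPow hs m *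
      ∏ i ∈ Finset.univ.filter (fun i => (S i).isSome), zpModPow (h i) ((S i).getD 0))
    (r : ZMod p) (s₀ : G₁) (s₁ : G₂)
    (hs₀ : s₀ = zpModPow g₂ α * zpModPow Q r)
    (hs₁ : s₁ = zpModPow g r) :
    e s₀ g = e g₂ g₁ * e Q s₁ := by
  haveI : Fact (1 < p) := ⟨hp.one_lt⟩
  have hone₁ : ∀ (b : G₁), zpModPow b (1 : ZMod p) = b := by
    intro b; simp [zpModPow, ZMod.val_one]
  have hone₂ : ∀ (b : G₂), zpModPow b (1 : ZMod p) = b := by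
    intro b; simp [zpModPow, ZMod.val_one]
  have keyL : ∀ (a : G₁) (b : G₂) (x : ZMod p),
      e (zpModPow a x) b = zpModPow (e a b) x := by
    intro a b x
    conv_lhs => rw [← hone₂ b]
    rw [hbil, mul_one]
  have keyR : ∀ (a : G₁) (b : G₂) (x : ZMod p),
      e a (zpModPow b x) = zpModPow (e a b) x := by
    intro a b x
    conv_lhs => rw [← hone₁ a]
    rw [hbil, one_mul]
  rw [hs₀, hs₁, hg₁, hmulL, keyL, keyL, keyR, keyR]
end

section
/- In the Complete Subtree method, to cover all but r revoked leaves of a complete binary tree with n = 2^d leaves using disjoint complete subtrees, at most r·d subtrees suffice (and more precisely O(r·log(n/r)) suffice); formally: for any set R of r ≥ 1 leaves of the depth-d binary tree, the complement [0, 2^d) \ R can be partitioned into at most r·d dyadic intervals. -/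
private lemma image_add_Ico (c a b : ℕ) :
    (Finset.Ico a b).image (· + c) = Finset.Ico (a + c) (b + c) := by
  ext x
  simp only [Finset.mem_image, Finset.mem_Ico]
  constructor
  · rintro ⟨y, hy, rfl⟩; omega
  · intro h; exact ⟨x - c, by omega, by omega⟩

private lemma cs_glue (d : ℕ) (S0 S1 : Finset ℕ) (D0 D1 : Finset (ℕ × ℕ))
    (hS0 : S0 ⊆ Finset.range (2 ^ d)) (hS1 : S1 ⊆ Finset.range (2 ^ d))
    (hv0 : ∀ q ∈ D0, q.1 ≤ d ∧ q.2 < 2 ^ (d - q.1))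
    (hv1 : ∀ q ∈ D1, q.1 ≤ d ∧ q.2 < 2 ^ (d - q.1))
    (hp0 : (D0 : Set (ℕ × ℕ)).PairwiseDisjoint
        (fun q => Finset.Ico (q.2 * 2 ^ q.1) ((q.2 + 1) * 2 ^ q.1)))
    (hp1 : (D1 : Set (ℕ × ℕ)).PairwiseDisjoint
        (fun q => Finset.Ico (q.2 * 2 ^ q.1) ((q.2 + 1) * 2 ^ q.1)))
    (hu0 : D0.biUnion (fun q => Finset.Ico (q.2 * 2 ^ q.1) ((q.2 + 1) * 2 ^ q.1))
        = Finset.range (2 ^ d) \ S0)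
    (hu1 : D1.biUnion (fun q => Finset.Ico (q.2 * 2 ^ q.1) ((q.2 + 1) * 2 ^ q.1))
        = Finset.range (2 ^ d) \ S1) :
    ∃ D : Finset (ℕ × ℕ),
      D.card ≤ D0.card + D1.card ∧
      (∀ q ∈ D, q.1 ≤ d + 1 ∧ q.2 < 2 ^ (d + 1 - q.1)) ∧
      (D : Set (ℕ × ℕ)).PairwiseDisjoint
        (fun q => Finset.Ico (q.2 * 2 ^ q.1) ((q.2 + 1) * 2 ^ q.1)) ∧
      D.biUnion (fun q => Finset.Ico (q.2 * 2 ^ q.1) ((q.2 + 1) * 2 ^ q.1))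
        = Finset.range (2 ^ (d + 1)) \ (S0 ∪ S1.image (· + 2 ^ d)) := by
  set I : ℕ × ℕ → Finset ℕ :=
    fun q => Finset.Ico (q.2 * 2 ^ q.1) ((q.2 + 1) * 2 ^ q.1) with hI
  set f : ℕ × ℕ → ℕ × ℕ := fun q => (q.1, q.2 + 2 ^ (d - q.1)) with hf
  -- the shift identity
  have hshift : ∀ p ∈ D1, I (f p) = (I p).image (· + 2 ^ d) := by
    intro p hp
    obtain ⟨hk, _⟩ := hv1 p hp
    have h2 : 2 ^ (d - p.1) * 2 ^ p.1 = 2 ^ d := by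
      rw [← pow_add]; congr 1; omega
    simp only [hI, hf, image_add_Ico]
    congr 1
    · rw [add_mul, h2]
    · rw [add_mul, add_mul, add_mul, h2]; ring
  -- each left interval lives in the left half
  have hL0 : ∀ q ∈ D0, ∀ x ∈ I q, x < 2 ^ d := by
    intro q hq x hx
    have : x ∈ D0.biUnion I := Finset.mem_biUnion.2 ⟨q, hq, hx⟩
    rw [hu0] at this
    exact Finset.mem_range.1 (Finset.mem_sdiff.1 this).1
  have hL1 : ∀ q ∈ D1, ∀ x ∈ I q, x < 2 ^ d := by
    intro q hq x hx
    have : x ∈ D1.biUnion I := Finset.mem_biUnion.2 ⟨q, hq, hx⟩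
    rw [hu1] at this
    exact Finset.mem_range.1 (Finset.mem_sdiff.1 this).1
  -- shifted intervals live in the right half
  have hR1 : ∀ p ∈ D1, ∀ x ∈ I (f p), 2 ^ d ≤ x ∧ x < 2 ^ d + 2 ^ d := by
    intro p hp x hx
    rw [hshift p hp] at hx
    obtain ⟨y, hy, rfl⟩ := Finset.mem_image.1 hx
    have := hL1 p hp y hy
    omega
  refine ⟨D0 ∪ D1.image f, ?_, ?_, ?_, ?_⟩
  · exact le_trans (Finset.card_union_le _ _)
      (Nat.add_le_add_left Finset.card_image_le _)
  · intro q hq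
    rcases Finset.mem_union.1 hq with hq | hq
    · obtain ⟨h1, h2⟩ := hv0 q hq
      refine ⟨by omega, lt_of_lt_of_le h2 ?_⟩
      exact Nat.pow_le_pow_right (by norm_num) (by omega)
    · obtain ⟨p, hp, rfl⟩ := Finset.mem_image.1 hq
      obtain ⟨h1, h2⟩ := hv1 p hp
      have hpw : 2 ^ (d + 1 - p.1) = 2 ^ (d - p.1) + 2 ^ (d - p.1) := by
        have : d + 1 - p.1 = (d - p.1) + 1 := by omega
        rw [this, pow_succ]; omega
      simp only [hf]
      exact ⟨by omega, by omega⟩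
  · intro q hq q' hq' hne
    simp only [Finset.coe_union, Set.mem_union, Finset.mem_coe,
      Finset.mem_image] at hq hq'
    rcases hq with hq | ⟨p, hp, rfl⟩ <;> rcases hq' with hq' | ⟨p', hp', rfl⟩
    · exact hp0 hq hq' hne
    · refine Finset.disjoint_left.2 fun x hx hx' => ?_
      have h1 := hL0 q hq x hx
      have h2 := hR1 p' hp' x hx'
      omega
    · refine Finset.disjoint_left.2 fun x hx hx' => ?_
      have h1 := hL0 q' hq' x hx'
      have h2 := hR1 p hp x hx
      omega
    · have hpne : p ≠ p' := by rintro rfl; exact hne rfl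
      have := hp1 (Finset.mem_coe.2 hp) (Finset.mem_coe.2 hp') hpne
      rw [Function.onFun] at this ⊢
      show Disjoint (I (f p)) (I (f p'))
      rw [hshift p hp, hshift p' hp']
      exact (Finset.disjoint_image (add_left_injective _)).2 this
  · have hsplit : (D0 ∪ D1.image f).biUnion I = D0.biUnion I ∪ (D1.image f).biUnion I := by
      ext x
      simp only [Finset.mem_biUnion, Finset.mem_union]
      constructor
      · rintro ⟨q, hq | hq, hx⟩
        · exact Or.inl ⟨q, hq, hx⟩
        · exact Or.inr ⟨q, hq, hx⟩
      · rintro (⟨q, hq, hx⟩ | ⟨q, hq, hx⟩)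
        · exact ⟨q, Or.inl hq, hx⟩
        · exact ⟨q, Or.inr hq, hx⟩
    rw [hsplit, Finset.image_biUnion, Finset.biUnion_congr rfl hshift,
      ← Finset.biUnion_image, hu0, hu1,
      Finset.image_sdiff _ _ (add_left_injective _)]
    have hrange : (Finset.range (2 ^ d)).image (· + 2 ^ d)
        = Finset.Ico (2 ^ d) (2 ^ d + 2 ^ d) := by
      rw [Finset.range_eq_Ico, image_add_Ico, Nat.zero_add]
    rw [hrange]
    ext x
    have h0 : x ∈ S0 → x < 2 ^ d := fun h => Finset.mem_range.1 (hS0 h)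
    have h1 : x ∈ S1.image (· + 2 ^ d) → 2 ^ d ≤ x ∧ x < 2 ^ d + 2 ^ d := by
      intro h
      obtain ⟨y, hy, rfl⟩ := Finset.mem_image.1 h
      have := Finset.mem_range.1 (hS1 hy); omega
    simp only [Finset.mem_union, Finset.mem_sdiff, Finset.mem_range, Finset.mem_Ico]
    by_cases hx0 : x ∈ S0
    · have a0 := h0 hx0
      by_cases hx1 : x ∈ S1.image (· + 2 ^ d)
      · have a1 := h1 hx1
        simp [hx0, hx1] <;> omega
      · simp [hx0, hx1] <;> omega
    · by_cases hx1 : x ∈ S1.image (· + 2 ^ d)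
      · have a1 := h1 hx1
        simp [hx0, hx1] <;> omega
      · simp [hx0, hx1] <;> omega

/-- Complete Subtree cover bound: for any nonempty set `R` of `r` revoked
leaves of the depth-`d` binary tree (leaves identified with `[0, 2^d)`),
the complement `[0, 2^d) \ R` can be partitioned into at most `r·d`
dyadic intervals. A pair `(k, j)` encodes the dyadic interval
`[j·2^k, (j+1)·2^k)` of level `k ≤ d` with `j < 2^(d-k)`. -/
theorem cs_cover_bound (d : ℕ) (R : Finset ℕ)
    (hR : R ⊆ Finset.range (2 ^ d)) (hr : 1 ≤ R.card) :
    ∃ D : Finset (ℕ × ℕ),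
      D.card ≤ R.card * d ∧
      (∀ q ∈ D, q.1 ≤ d ∧ q.2 < 2 ^ (d - q.1)) ∧
      (D : Set (ℕ × ℕ)).PairwiseDisjoint
        (fun q => Finset.Ico (q.2 * 2 ^ q.1) ((q.2 + 1) * 2 ^ q.1)) ∧
      D.biUnion (fun q => Finset.Ico (q.2 * 2 ^ q.1) ((q.2 + 1) * 2 ^ q.1))
        = Finset.range (2 ^ d) \ R := by
  induction d generalizing R with
  | zero =>
    have hRe : R = {0} := by
      apply Finset.eq_of_subset_of_card_le
      · simpa using hR
      · simpa using hr
    refine ⟨∅, by simp, by simp, by simp, ?_⟩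
    simp [hRe]
  | succ d ih =>
    classical
    set R0 : Finset ℕ := R.filter (fun x => x < 2 ^ d) with hR0def
    set R1 : Finset ℕ := (R.filter (fun x => ¬ x < 2 ^ d)).image (fun x => x - 2 ^ d)
      with hR1def
    have hmemR : ∀ x ∈ R, x < 2 ^ (d + 1) := fun x hx => Finset.mem_range.1 (hR hx)
    have hR0sub : R0 ⊆ Finset.range (2 ^ d) := by
      intro x hx
      rw [hR0def, Finset.mem_filter] at hx
      exact Finset.mem_range.2 hx.2
    have hR1sub : R1 ⊆ Finset.range (2 ^ d) := by
      intro y hy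
      rw [hR1def] at hy
      obtain ⟨x, hx, rfl⟩ := Finset.mem_image.1 hy
      rw [Finset.mem_filter] at hx
      have := hmemR x hx.1
      have h2 : 2 ^ (d + 1) = 2 ^ d + 2 ^ d := by rw [pow_succ]; omega
      exact Finset.mem_range.2 (by omega)
    have hR1card : R1.card = (R.filter (fun x => ¬ x < 2 ^ d)).card := by
      rw [hR1def]
      apply Finset.card_image_of_injOn
      intro x hx y hy hxy
      simp only [Finset.coe_filter, Set.mem_setOf_eq] at hx hy
      simp only at hxy
      omega
    have hcard : R0.card + R1.card = R.card := by
      rw [hR1card, hR0def, Finset.card_filter_add_card_filter_not]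
    have himg : R1.image (· + 2 ^ d) = R.filter (fun x => ¬ x < 2 ^ d) := by
      rw [hR1def, Finset.image_image]
      have : ∀ x ∈ R.filter (fun x => ¬ x < 2 ^ d),
          ((· + 2 ^ d) ∘ (fun x => x - 2 ^ d)) x = id x := by
        intro x hx
        rw [Finset.mem_filter] at hx
        simp only [Function.comp, id]
        omega
      rw [Finset.image_congr this, Finset.image_id]
    have hunion : R0 ∪ R1.image (· + 2 ^ d) = R := by
      rw [himg, hR0def, Finset.filter_union_filter_not_eq]
    rcases Finset.eq_empty_or_nonempty R0 with h0 | h0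
    · -- left half fully live: cover it with the single interval (d, 0)
      have h0card : R0.card = 0 := by rw [h0]; rfl
      have hr1 : 1 ≤ R1.card := by omega
      obtain ⟨D1, hc1, hv1, hp1, hu1⟩ := ih R1 hR1sub hr1
      have hv0 : ∀ q ∈ ({(d, 0)} : Finset (ℕ × ℕ)), q.1 ≤ d ∧ q.2 < 2 ^ (d - q.1) := by
        intro q hq
        rw [Finset.mem_singleton] at hq
        subst hq
        simp
      have hp0 : (({(d, 0)} : Finset (ℕ × ℕ)) : Set (ℕ × ℕ)).PairwiseDisjoint
          (fun q => Finset.Ico (q.2 * 2 ^ q.1) ((q.2 + 1) * 2 ^ q.1)) := by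
        rw [Finset.coe_singleton]
        exact Set.pairwiseDisjoint_singleton _ _
      have hu0 : ({(d, 0)} : Finset (ℕ × ℕ)).biUnion
          (fun q => Finset.Ico (q.2 * 2 ^ q.1) ((q.2 + 1) * 2 ^ q.1))
          = Finset.range (2 ^ d) \ R0 := by
        rw [h0, Finset.sdiff_empty, Finset.singleton_biUnion]
        rw [Finset.range_eq_Ico]
        norm_num
      obtain ⟨D, hc, hv, hp, hu⟩ := cs_glue d R0 R1 {(d, 0)} D1
        hR0sub hR1sub hv0 hv1 hp0 hp1 hu0 hu1
      refine ⟨D, ?_, hv, hp, by rwa [hunion] at hu⟩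
      have hR1R : R1.card = R.card := by omega
      rw [hR1R] at hc1
      have : R.card * (d + 1) = R.card * d + R.card := by ring
      simp only [Finset.card_singleton] at hc
      omega
    · rcases Finset.eq_empty_or_nonempty R1 with h1 | h1
      · -- right half fully live
        have h1card : R1.card = 0 := by rw [h1]; rfl
        have hr0 : 1 ≤ R0.card := Finset.card_pos.2 h0
        obtain ⟨D0, hc0, hv0, hp0, hu0⟩ := ih R0 hR0sub hr0
        have hv1 : ∀ q ∈ ({(d, 0)} : Finset (ℕ × ℕ)), q.1 ≤ d ∧ q.2 < 2 ^ (d - q.1) := by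
          intro q hq
          rw [Finset.mem_singleton] at hq
          subst hq
          simp
        have hp1 : (({(d, 0)} : Finset (ℕ × ℕ)) : Set (ℕ × ℕ)).PairwiseDisjoint
            (fun q => Finset.Ico (q.2 * 2 ^ q.1) ((q.2 + 1) * 2 ^ q.1)) := by
          rw [Finset.coe_singleton]
          exact Set.pairwiseDisjoint_singleton _ _
        have hu1 : ({(d, 0)} : Finset (ℕ × ℕ)).biUnion
            (fun q => Finset.Ico (q.2 * 2 ^ q.1) ((q.2 + 1) * 2 ^ q.1))
            = Finset.range (2 ^ d) \ R1 := by
          rw [h1, Finset.sdiff_empty, Finset.singleton_biUnion]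
          rw [Finset.range_eq_Ico]
          norm_num
        obtain ⟨D, hc, hv, hp, hu⟩ := cs_glue d R0 R1 D0 {(d, 0)}
          hR0sub hR1sub hv0 hv1 hp0 hp1 hu0 hu1
        refine ⟨D, ?_, hv, hp, by rwa [hunion] at hu⟩
        have hR0R : R0.card = R.card := by omega
        rw [hR0R] at hc0
        have : R.card * (d + 1) = R.card * d + R.card := by ring
        simp only [Finset.card_singleton] at hc
        omega
      · -- both halves have revoked leaves
        have hr0 : 1 ≤ R0.card := Finset.card_pos.2 h0
        have hr1 : 1 ≤ R1.card := Finset.card_pos.2 h1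
        obtain ⟨D0, hc0, hv0, hp0, hu0⟩ := ih R0 hR0sub hr0
        obtain ⟨D1, hc1, hv1, hp1, hu1⟩ := ih R1 hR1sub hr1
        obtain ⟨D, hc, hv, hp, hu⟩ := cs_glue d R0 R1 D0 D1
          hR0sub hR1sub hv0 hv1 hp0 hp1 hu0 hu1
        refine ⟨D, ?_, hv, hp, by rwa [hunion] at hu⟩
        calc D.card ≤ D0.card + D1.card := hc
          _ ≤ R0.card * d + R1.card * d := add_le_add hc0 hc1
          _ = R.card * d := by rw [← add_mul, hcard]
          _ ≤ R.card * (d + 1) := Nat.mul_le_mul_left _ (by omega)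
end
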